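/- Birthday bound for Pollard-ρ: for a uniformly random function φ on a set of size n, the expected number of elements in the orbit of a fixed starting point x (equivalently, the expected value of tail length plus cycle length) is at most 2√n + 1. In particular it is O(√n). -/

import Mathlib

open Finset
set_option linter.unusedSectionVars false

section Aux
variable {X : Type*} [Fintype X] [DecidableEq X] (x : X) (φ : X → X)

/-- Iterates 0..m of φ starting at x are pairwise distinct. -/
def PP (m : ℕ) : Prop :=
  ∀ i ∈ range (m+1), ∀ j ∈ range (m+1), φ^[i] x = φ^[j] x → i = j

instance (m : ℕ) : Decidable (PP x φ m) := by unfold PP; infer_instance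

lemma PP_zero : PP x φ 0 := by
  intro i hi j hj _
  simp only [mem_range] at hi hj; omega

lemma PP_mono {m k : ℕ} (h : k ≤ m) (hP : PP x φ m) : PP x φ k := by
  intro i hi j hj he
  simp only [mem_range] at hi hj
  exact hP i (by simp only [mem_range]; omega) j (by simp only [mem_range]; omega) he

lemma iter_eventually {i j : ℕ} (hij : i < j) (h : φ^[j] x = φ^[i] x) :
    ∀ k, ∃ l < j, φ^[k] x = φ^[l] x := by
  intro k
  induction k using Nat.strong_induction_on with
  | _ k IH =>
    by_cases hk : k < j
    · exact ⟨k, hk, rfl⟩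
    · push_neg at hk
      have h1 : φ^[k] x = φ^[k - j + i] x := by
        have hkk : k = (k - j) + j := by omega
        conv_lhs => rw [hkk]
        rw [Function.iterate_add_apply, h, ← Function.iterate_add_apply]
      obtain ⟨l, hl, he⟩ := IH (k - j + i) (by omega)
      exact ⟨l, hl, h1.trans he⟩

/-- Number of elements in the orbit of `x`. -/
noncomputable def SS : ℕ := Set.ncard {y : X | ∃ m : ℕ, φ^[m] x = y}

lemma le_SS_of_PP {m : ℕ} (h : PP x φ m) : m + 1 ≤ SS x φ := by
  have hsub : ↑((range (m+1)).image (fun i => φ^[i] x)) ⊆ {y : X | ∃ m : ℕ, φ^[m] x = y} := by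
    intro y hy
    simp only [coe_image, Set.mem_image, mem_coe, mem_range] at hy
    obtain ⟨i, _, rfl⟩ := hy
    exact ⟨i, rfl⟩
  have hcard : ((range (m+1)).image (fun i => φ^[i] x)).card = m + 1 := by
    rw [Finset.card_image_of_injOn, card_range]
    intro i hi j hj he
    exact h i hi j hj he
  calc m + 1 = ((range (m+1)).image (fun i => φ^[i] x)).card := hcard.symm
    _ = Set.ncard ↑((range (m+1)).image (fun i => φ^[i] x)) := (Set.ncard_coe_finset _).symm
    _ ≤ SS x φ := Set.ncard_le_ncard hsub (Set.toFinite _)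

lemma SS_le_of_eq {i j : ℕ} (hij : i < j) (h : φ^[j] x = φ^[i] x) : SS x φ ≤ j := by
  have hsub : {y : X | ∃ m : ℕ, φ^[m] x = y} ⊆ ↑((range j).image (fun i => φ^[i] x)) := by
    rintro y ⟨k, rfl⟩
    obtain ⟨l, hl, he⟩ := iter_eventually x φ hij h k
    simp only [coe_image, Set.mem_image, mem_coe, mem_range]
    exact ⟨l, hl, he.symm⟩
  calc SS x φ ≤ Set.ncard ↑((range j).image (fun i => φ^[i] x)) :=
        Set.ncard_le_ncard hsub (Set.toFinite _)
    _ = ((range j).image (fun i => φ^[i] x)).card := Set.ncard_coe_finset _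
    _ ≤ j := Finset.card_image_le.trans (le_of_eq (card_range j))

lemma PP_iff_lt_SS {m : ℕ} : PP x φ m ↔ m < SS x φ := by
  constructor
  · intro h; exact le_SS_of_PP x φ h
  · intro h
    by_contra hP
    simp only [PP] at hP
    push_neg at hP
    obtain ⟨i, hi, j, hj, he, hne⟩ := hP
    simp only [mem_range] at hi hj
    rcases Nat.lt_or_ge i j with hij | hij
    · have := SS_le_of_eq x φ hij he.symm
      omega
    · have hji : j < i := by omega
      have := SS_le_of_eq x φ hji he
      omega

lemma SS_le_card : SS x φ ≤ Fintype.card X := by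
  have := Set.ncard_le_ncard (Set.subset_univ {y : X | ∃ m : ℕ, φ^[m] x = y}) (Set.toFinite _)
  simpa [Set.ncard_univ, SS] using this

lemma card_filter_PP {n : ℕ} (hn : Fintype.card X = n) :
    ((range n).filter (fun m => PP x φ m)).card = SS x φ := by
  have hS : SS x φ ≤ n := hn ▸ SS_le_card x φ
  have h1 : (range n).filter (fun m => PP x φ m) = range (SS x φ) := by
    ext m
    simp only [mem_filter, mem_range, PP_iff_lt_SS]
    omega
  rw [h1, card_range]

lemma iter_update {m : ℕ} (h : PP x φ m) (y : X) :
    ∀ i ≤ m, (Function.update φ (φ^[m] x) y)^[i] x = φ^[i] x := by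
  intro i hi
  induction i with
  | zero => simp
  | succ i IH =>
    have hne : φ^[i] x ≠ φ^[m] x := by
      intro he
      have := h i (by simp only [mem_range]; omega) m (by simp only [mem_range]; omega) he
      omega
    rw [Function.iterate_succ_apply', Function.iterate_succ_apply', IH (by omega),
      Function.update_of_ne hne]

lemma iter_update_top {m : ℕ} (h : PP x φ m) (y : X) :
    (Function.update φ (φ^[m] x) y)^[m+1] x = y := by
  rw [Function.iterate_succ_apply', iter_update x φ h y m le_rfl, Function.update_self]

lemma PP_congr {m : ℕ} {ψ ψ' : X → X} (h : ∀ i ≤ m, ψ'^[i] x = ψ^[i] x)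
    (hP : PP x ψ m) : PP x ψ' m := by
  intro i hi j hj he
  simp only [mem_range] at hi hj
  rw [h i (by omega), h j (by omega)] at he
  exact hP i (by simp only [mem_range]; omega) j (by simp only [mem_range]; omega) he

lemma PP_update_succ {m : ℕ} (h : PP x φ m) {y : X}
    (hy : ∀ i ≤ m, φ^[i] x ≠ y) :
    PP x (Function.update φ (φ^[m] x) y) (m+1) := by
  have hiter : ∀ k < m + 2, (Function.update φ (φ^[m] x) y)^[k] x =
      if k = m + 1 then y else φ^[k] x := by
    intro k hk
    by_cases hk' : k = m + 1
    · subst hk'; simp [iter_update_top x φ h y]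
    · rw [if_neg hk', iter_update x φ h y k (by omega)]
  intro i hi j hj he
  simp only [mem_range] at hi hj
  rw [hiter i hi, hiter j hj] at he
  by_cases hi' : i = m + 1 <;> by_cases hj' : j = m + 1
  · omega
  · rw [if_pos hi', if_neg hj'] at he
    exact absurd he.symm (hy j (by omega))
  · rw [if_neg hi', if_pos hj'] at he
    exact absurd he (hy i (by omega))
  · rw [if_neg hi', if_neg hj'] at he
    exact h i (by simp only [mem_range]; omega) j (by simp only [mem_range]; omega) he

/-- Functions whose iterates 0..m at x are distinct. -/
def Am (m : ℕ) : Finset (X → X) := univ.filter (fun φ => PP x φ m)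

lemma card_Am_succ (m : ℕ) :
    (Am x (m+1)).card * Fintype.card X = (Am x m).card * (Fintype.card X - (m+1)) := by
  classical
  have key : ((Am x (m+1)) ×ˢ (univ : Finset X)).card =
      ((Am x m).sigma (fun φ => ((range (m+1)).image (fun i => φ^[i] x))ᶜ)).card := by
    refine Finset.card_bij'
      (fun p _ => ⟨Function.update p.1 (p.1^[m] x) p.2, p.1 (p.1^[m] x)⟩)
      (fun q _ => (Function.update q.1 (q.1^[m] x) q.2, q.1 (q.1^[m] x)))
      ?hi ?hj ?left ?right
    case hi =>
      rintro ⟨ψ, y'⟩ hp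
      simp only [mem_product, Am, mem_filter, mem_univ, true_and, and_true] at hp
      have hP1 : PP x ψ (m+1) := hp
      have hPm : PP x ψ m := PP_mono x ψ (by omega) hP1
      simp only [Finset.mem_sigma, Am, mem_filter, mem_univ, true_and, Finset.mem_compl,
        Finset.mem_image, mem_range, not_exists, not_and]
      refine ⟨PP_congr x (iter_update x ψ hPm y') hPm, ?_⟩
      rintro i hi he
      rw [iter_update x ψ hPm y' i (by omega)] at he
      have h2 : ψ^[i] x = ψ^[m+1] x := by
        rw [Function.iterate_succ_apply']; exact he
      have := hP1 i (by simp only [mem_range]; omega) (m+1)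
        (by simp only [mem_range]; omega) h2
      omega
    case hj =>
      rintro ⟨φ', y⟩ hq
      simp only [Finset.mem_sigma, Am, mem_filter, mem_univ, true_and, Finset.mem_compl,
        Finset.mem_image, mem_range, not_exists, not_and] at hq
      obtain ⟨hPm, hy⟩ := hq
      have hy' : ∀ i ≤ m, φ'^[i] x ≠ y := fun i hi he => hy i (by omega) he
      simp only [mem_product, Am, mem_filter, mem_univ, true_and, and_true]
      exact PP_update_succ x φ' hPm hy'
    case left =>
      rintro ⟨ψ, y'⟩ hp
      simp only [mem_product, Am, mem_filter, mem_univ, true_and, and_true] at hp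
      have hPm : PP x ψ m := PP_mono x ψ (by omega) hp
      have hfix : (Function.update ψ (ψ^[m] x) y')^[m] x = ψ^[m] x :=
        iter_update x ψ hPm y' m le_rfl
      rw [Prod.mk.injEq]
      rw [hfix]
      simp [Function.update_idem, Function.update_self, Function.update_eq_self]
    case right =>
      rintro ⟨φ', y⟩ hq
      simp only [Finset.mem_sigma, Am, mem_filter, mem_univ, true_and, Finset.mem_compl,
        Finset.mem_image, mem_range, not_exists, not_and] at hq
      obtain ⟨hPm, -⟩ := hq
      have hfix : (Function.update φ' (φ'^[m] x) y)^[m] x = φ'^[m] x :=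
        iter_update x φ' hPm y m le_rfl
      dsimp only
      rw [hfix]
      simp [Function.update_idem, Function.update_self, Function.update_eq_self]
  rw [Finset.card_product, Finset.card_univ, Finset.card_sigma] at key
  rw [key]
  calc ∑ φ ∈ Am x m, ((range (m+1)).image (fun i => φ^[i] x))ᶜ.card
      = ∑ _φ ∈ Am x m, (Fintype.card X - (m+1)) := by
        refine Finset.sum_congr rfl (fun φ hφ => ?_)
        simp only [Am, mem_filter, mem_univ, true_and] at hφ
        rw [Finset.card_compl, Finset.card_image_of_injOn, card_range]
        intro i hi j hj he
        exact hφ i hi j hj he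
    _ = (Am x m).card * (Fintype.card X - (m+1)) := by
        rw [Finset.sum_const, smul_eq_mul]

lemma sum_SS_eq {n : ℕ} (hn : Fintype.card X = n) :
    ∑ φ : X → X, (SS x φ : ℝ) = ∑ m ∈ range n, ((Am x m).card : ℝ) := by
  have h1 : ∀ φ : X → X, (SS x φ : ℝ) = ∑ m ∈ range n, (if PP x φ m then (1:ℝ) else 0) := by
    intro φ
    rw [Finset.sum_boole, card_filter_PP x φ hn]
  simp only [h1]
  rw [Finset.sum_comm]
  refine Finset.sum_congr rfl (fun m _ => ?_)
  rw [Finset.sum_boole]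
  congr 1

lemma card_Am_div {n : ℕ} (hn : Fintype.card X = n) (hn0 : 0 < n) :
    ∀ m ≤ n, ((Am x m).card : ℝ) / (n:ℝ)^n = ∏ t ∈ Icc 1 m, (1 - (t:ℝ)/n) := by
  intro m
  induction m with
  | zero =>
    intro _
    have h0 : Am x 0 = (univ : Finset (X → X)) := by
      apply Finset.filter_true_of_mem
      intro φ _
      exact PP_zero x φ
    rw [h0]
    simp only [Icc_self, card_univ, Fintype.card_fun, hn]
    rw [Finset.Icc_eq_empty (by omega), Finset.prod_empty]
    push_cast
    rw [div_self (by positivity)]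
  | succ m IH =>
    intro hm
    have hrec := card_Am_succ x m
    rw [hn] at hrec
    have hc : ((Am x (m+1)).card : ℝ) * n = ((Am x m).card : ℝ) * ((n:ℝ) - (m+1)) := by
      have h := congrArg (Nat.cast : ℕ → ℝ) hrec
      push_cast [Nat.cast_sub hm] at h
      convert h using 2 <;> push_cast <;> ring
    rw [Finset.prod_Icc_succ_top (by omega : 1 ≤ m + 1), ← IH (by omega)]
    have hnne : (n:ℝ) ≠ 0 := by positivity
    have hpne : ((n:ℝ))^n ≠ 0 := by positivity
    field_simp
    push_cast
    linear_combination hc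

lemma analytic_bound (n : ℕ) (hn0 : 0 < n) :
    ∑ m ∈ range n, ∏ t ∈ Icc 1 m, (1 - (t:ℝ)/n) ≤ 2 * Real.sqrt n + 1 := by
  set k : ℕ := Nat.sqrt n + 1 with hk
  have hn0' : (0:ℝ) < n := by exact_mod_cast hn0
  have hsq0 : (0:ℝ) ≤ Real.sqrt n := Real.sqrt_nonneg _
  have hks : Real.sqrt n ≤ (k:ℝ) := by
    have h1 : (n:ℝ) < ((k:ℕ):ℝ)^2 := by exact_mod_cast Nat.lt_succ_sqrt' n
    have := Real.sqrt_le_sqrt h1.le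
    calc Real.sqrt n ≤ Real.sqrt ((k:ℝ)^2) := this
      _ = k := by rw [Real.sqrt_sq (by positivity)]
  have hks' : (k:ℝ) ≤ Real.sqrt n + 1 := by
    have h1 : ((Nat.sqrt n : ℕ):ℝ) ≤ Real.sqrt n := by
      have h2 : ((Nat.sqrt n)^2 : ℝ) ≤ (n:ℝ) := by exact_mod_cast Nat.sqrt_le' n
      calc ((Nat.sqrt n : ℕ):ℝ) = Real.sqrt (((Nat.sqrt n : ℕ):ℝ)^2) := by
            rw [Real.sqrt_sq (by positivity)]
        _ ≤ Real.sqrt n := Real.sqrt_le_sqrt h2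
    push_cast [hk]
    linarith
  have hq01 : ∀ m < n, (0:ℝ) ≤ ∏ t ∈ Icc 1 m, (1 - (t:ℝ)/n) ∧
      ∏ t ∈ Icc 1 m, (1 - (t:ℝ)/n) ≤ 1 := by
    intro m hm
    constructor
    · apply Finset.prod_nonneg
      intro t ht
      simp only [mem_Icc] at ht
      have : (t:ℝ) ≤ n := by exact_mod_cast (by omega : t ≤ n)
      have := div_le_one_of_le₀ this hn0'.le
      linarith
    · apply Finset.prod_le_one
      · intro t ht
        simp only [mem_Icc] at ht
        have : (t:ℝ) ≤ n := by exact_mod_cast (by omega : t ≤ n)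
        have := div_le_one_of_le₀ this hn0'.le
        linarith
      · intro t ht
        simp only [mem_Icc] at ht
        have ht0 : (0:ℝ) ≤ (t:ℝ)/n := by positivity
        linarith
  by_cases hkn : n ≤ k
  · -- trivial: sum ≤ n ≤ k ≤ √n + 1
    have : ∑ m ∈ range n, ∏ t ∈ Icc 1 m, (1 - (t:ℝ)/n) ≤ ∑ _m ∈ range n, (1:ℝ) := by
      apply Finset.sum_le_sum
      intro m hm
      exact (hq01 m (mem_range.mp hm)).2
    rw [Finset.sum_const, card_range] at this
    simp only [nsmul_eq_mul, mul_one] at this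
    have hnk : (n:ℝ) ≤ (k:ℝ) := by exact_mod_cast hkn
    linarith
  · push_neg at hkn
    set r : ℝ := 1 - (k:ℝ)/n with hr
    have hk0 : 0 < k := by omega
    have hk0' : (0:ℝ) < k := by exact_mod_cast hk0
    have hkn' : (k:ℝ) < n := by exact_mod_cast hkn
    have hr0 : 0 ≤ r := by
      rw [hr]
      have : (k:ℝ)/n ≤ 1 := by
        rw [div_le_one hn0']; linarith
      linarith
    have hr1 : 1 - r = (k:ℝ)/n := by rw [hr]; ring
    have hr1pos : 0 < 1 - r := by rw [hr1]; positivity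
    -- key pointwise bound
    have key : ∀ m, k ≤ m → m < n → ∏ t ∈ Icc 1 m, (1 - (t:ℝ)/n) ≤ r^(m - k) := by
      intro m hkm
      induction m, hkm using Nat.le_induction with
      | base =>
        intro hkn2
        simpa using (hq01 k hkn2).2
      | succ m hm IH =>
        intro hmn
        rw [Finset.prod_Icc_succ_top (by omega : 1 ≤ m + 1)]
        have h1 := IH (by omega)
        have h2 : (1 - ((m+1:ℕ):ℝ)/n) ≤ r := by
          rw [hr]
          have hle : (k:ℝ)/n ≤ ((m+1:ℕ):ℝ)/n := by
            gcongr
            exact_mod_cast (by omega : k ≤ m+1)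
          linarith
        have h3 : (0:ℝ) ≤ 1 - ((m+1:ℕ):ℝ)/n := by
          have : ((m+1:ℕ):ℝ) ≤ n := by exact_mod_cast (by omega : m+1 ≤ n)
          have := div_le_one_of_le₀ this hn0'.le
          push_cast at this ⊢
          linarith
        calc (∏ t ∈ Icc 1 m, (1 - (t:ℝ)/n)) * (1 - ((m+1:ℕ):ℝ)/n)
            ≤ r^(m-k) * r := by
              apply mul_le_mul h1 _ h3 (pow_nonneg hr0 _)
              exact h2
          _ = r^(m+1-k) := by rw [← pow_succ]; congr 1; omega
    -- split the sum
    have hsplit : ∑ m ∈ range n, ∏ t ∈ Icc 1 m, (1 - (t:ℝ)/n) =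
        (∑ m ∈ Ico 0 k, ∏ t ∈ Icc 1 m, (1 - (t:ℝ)/n)) +
        ∑ m ∈ Ico k n, ∏ t ∈ Icc 1 m, (1 - (t:ℝ)/n) := by
      rw [Finset.sum_Ico_consecutive _ (by omega) (by omega), Finset.range_eq_Ico]
    have hfirst : ∑ m ∈ Ico 0 k, ∏ t ∈ Icc 1 m, (1 - (t:ℝ)/n) ≤ (k:ℝ) := by
      have : ∑ m ∈ Ico 0 k, ∏ t ∈ Icc 1 m, (1 - (t:ℝ)/n) ≤ ∑ _m ∈ Ico 0 k, (1:ℝ) := by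
        apply Finset.sum_le_sum
        intro m hm
        simp only [mem_Ico] at hm
        exact (hq01 m (by omega)).2
      rw [Finset.sum_const] at this
      simp only [Nat.card_Ico, Nat.sub_zero, nsmul_eq_mul, mul_one] at this
      exact this
    have hsecond : ∑ m ∈ Ico k n, ∏ t ∈ Icc 1 m, (1 - (t:ℝ)/n) ≤ Real.sqrt n := by
      have hb1 : ∑ m ∈ Ico k n, ∏ t ∈ Icc 1 m, (1 - (t:ℝ)/n) ≤
          ∑ m ∈ Ico k n, r^(m - k) := by
        apply Finset.sum_le_sum
        intro m hm
        simp only [mem_Ico] at hm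
        exact key m hm.1 hm.2
      have hb2 : ∑ m ∈ Ico k n, r^(m - k) = ∑ j ∈ range (n - k), r^j := by
        rw [Finset.sum_Ico_eq_sum_range]
        refine Finset.sum_congr rfl (fun j _ => ?_)
        congr 1
        omega
      have hb3 : ∑ j ∈ range (n - k), r^j ≤ 1/(1 - r) := by
        have h := geom_sum_mul r (n - k)
        rw [le_div_iff₀ hr1pos]
        nlinarith [pow_nonneg hr0 (n - k)]
      have hb4 : 1/(1 - r) = (n:ℝ)/k := by
        rw [hr1, one_div_div]
      have hb5 : (n:ℝ)/k ≤ Real.sqrt n := by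
        rw [div_le_iff₀ hk0']
        nlinarith [Real.sq_sqrt hn0'.le]
      calc ∑ m ∈ Ico k n, ∏ t ∈ Icc 1 m, (1 - (t:ℝ)/n)
          ≤ ∑ m ∈ Ico k n, r^(m - k) := hb1
        _ = ∑ j ∈ range (n - k), r^j := hb2
        _ ≤ 1/(1 - r) := hb3
        _ = (n:ℝ)/k := hb4
        _ ≤ Real.sqrt n := hb5
    rw [hsplit]
    linarith

end Aux

/-- Birthday bound for Pollard-ρ: for a uniformly random function `φ` on a set of size
`n`, the expected number of elements of the orbit of a fixed starting point `x` is at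
most `2√n + 1`. -/
theorem stmt_12 {X : Type*} [Fintype X] [DecidableEq X] (x : X) (n : ℕ)
    (hn : Fintype.card X = n) (hn0 : 0 < n) :
    (∑ φ : X → X, (Set.ncard {y : X | ∃ m : ℕ, φ^[m] x = y} : ℝ))
        / Fintype.card (X → X) ≤ 2 * Real.sqrt n + 1 := by
  have h1 : (∑ φ : X → X, (Set.ncard {y : X | ∃ m : ℕ, φ^[m] x = y} : ℝ))
      = ∑ m ∈ range n, ((Am x m).card : ℝ) := sum_SS_eq x hn
  have h2 : (Fintype.card (X → X) : ℝ) = (n:ℝ)^n := by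
    rw [Fintype.card_fun, hn]
    push_cast
    ring
  rw [h1, h2, Finset.sum_div]
  calc ∑ m ∈ range n, ((Am x m).card : ℝ) / (n:ℝ)^n
      = ∑ m ∈ range n, ∏ t ∈ Icc 1 m, (1 - (t:ℝ)/n) := by
        refine Finset.sum_congr rfl (fun m hm => ?_)
        exact card_Am_div x hn hn0 m (le_of_lt (mem_range.mp hm))
    _ ≤ 2 * Real.sqrt n + 1 := analytic_bound n hn0
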